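/- Let V be a finite set with n ≥ 3 elements and let 𝒮 ⊆ 2^V be a family of subsets of V. If 𝒮 is cut-free (i.e., no nonempty proper subset C of V satisfies: every S ∈ 𝒮 neither intersects C crossingly, meaning for all S ∈ 𝒮, not all three of S∩C, C\S, S\C are nonempty), then any consecutive ordering of V to 𝒮 is unique up to reversal. That is, if σ and τ are both linear orderings of V in which every S ∈ 𝒮 occupies a set of consecutive positions, then τ = σ or τ is the reverse of σ. -/

import Mathlib

/-- `S` occupies consecutive positions in the ordering `σ`. -/
def IsIntervalIn {V : Type*} {n : ℕ} (σ : Fin n ≃ V) (S : Set V) : Prop :=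
  ∀ i j k : Fin n, i ≤ j → j ≤ k → σ i ∈ S → σ k ∈ S → σ j ∈ S

/-- `σ` is a consecutive ordering of `V` to the family `𝒮`. -/
def ConsecutiveOrd {V : Type*} {n : ℕ} (σ : Fin n ≃ V) (𝒮 : Set (Set V)) : Prop :=
  ∀ S ∈ 𝒮, IsIntervalIn σ S

/-- `S` intersects `C` (crossingly): all of `S∩C`, `C\S`, `S\C` are nonempty. -/
def Crosses {V : Type*} (S C : Set V) : Prop :=
  (S ∩ C).Nonempty ∧ (C \ S).Nonempty ∧ (S \ C).Nonempty

/-- A nontrivial subset `C` (with `2 ≤ |C| ≤ |V|-1`) is a cut of `𝒮`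
if no member of `𝒮` intersects it crossingly. -/
def IsCut {V : Type*} [Fintype V] (𝒮 : Set (Set V)) (C : Set V) : Prop :=
  2 ≤ C.ncard ∧ C.ncard ≤ Fintype.card V - 1 ∧ ∀ S ∈ 𝒮, ¬ Crosses S C

def CutFree {V : Type*} [Fintype V] (𝒮 : Set (Set V)) : Prop :=
  ¬ ∃ C : Set V, IsCut 𝒮 C

section Helpers

variable {V : Type*} {n : ℕ}

/-- Membership of elements between two members of an interval set. -/
lemma betw {σ : Fin n ≃ V} {S : Set V} (h : IsIntervalIn σ S) {x y : V}
    (hx : x ∈ S) (hy : y ∈ S) {j : Fin n}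
    (h1 : (σ.symm x : ℕ) ≤ (j : ℕ)) (h2 : (j : ℕ) ≤ (σ.symm y : ℕ)) : σ j ∈ S :=
  h (σ.symm x) j (σ.symm y) (Fin.le_def.mpr h1) (Fin.le_def.mpr h2)
    (by simpa using hx) (by simpa using hy)

lemma exists_cross [Fintype V] {𝒮 : Set (Set V)} (hcf : CutFree 𝒮) {C : Set V}
    (h2 : 2 ≤ C.ncard) (hle : C.ncard ≤ Fintype.card V - 1) :
    ∃ S ∈ 𝒮, Crosses S C := by
  by_contra h
  push_neg at h
  exact hcf ⟨C, h2, hle, fun S hS => h S hS⟩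

lemma interval_union {σ : Fin n ≃ V} {S T : Set V} (hS : IsIntervalIn σ S)
    (hT : IsIntervalIn σ T) {z : V} (hzS : z ∈ S) (hzT : z ∈ T) :
    IsIntervalIn σ (S ∪ T) := by
  intro i j k hij hjk hi hk
  rcases hi with hi | hi <;> rcases hk with hk | hk
  · exact Or.inl (hS i j k hij hjk hi hk)
  · rcases le_or_gt j (σ.symm z) with h | h
    · exact Or.inl (hS i j _ hij h hi (by simpa using hzS))
    · exact Or.inr (hT _ j k h.le hjk (by simpa using hzT) hk)
  · rcases le_or_gt j (σ.symm z) with h | h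
    · exact Or.inr (hT i j _ hij h hi (by simpa using hzT))
    · exact Or.inl (hS _ j k h.le hjk (by simpa using hzS) hk)
  · exact Or.inr (hT i j k hij hjk hi hk)

end Helpers

section Core

variable {V : Type*} [Fintype V] [DecidableEq V] {n : ℕ}

/-- The core descent lemma: if the two orderings agree on positions `< m`,
disagree at `m` (with `β m` sitting at a later `α`-position `r`), and there is
a "witness" common interval `T = α [m, b]` with `b < r` whose `β`-positions
all exceed `m`, then we reach a contradiction (using a maximal such witness). -/
lemma core (hn : n = Fintype.card V)
    (𝒮 : Set (Set V)) (hcf : CutFree 𝒮)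
    (α β : Fin n ≃ V) (hα : ConsecutiveOrd α 𝒮) (hβ : ConsecutiveOrd β 𝒮)
    (m : Fin n) (hm : 1 ≤ (m : ℕ))
    (hpre : ∀ j : Fin n, (j : ℕ) < (m : ℕ) → α j = β j)
    (hT0 : ∃ b : Fin n, ∃ T : Set V,
      (m : ℕ) ≤ (b : ℕ) ∧ (b : ℕ) < ((α.symm (β m)) : ℕ) ∧
      (∀ x : V, x ∈ T ↔ ((m : ℕ) ≤ ((α.symm x) : ℕ) ∧ ((α.symm x) : ℕ) ≤ (b : ℕ))) ∧
      IsIntervalIn β T ∧ (∀ x ∈ T, (m : ℕ) < ((β.symm x) : ℕ))) : False := by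
  classical
  set r : Fin n := α.symm (β m) with hrdef
  set B : Set (Fin n) := {b : Fin n | ∃ T : Set V,
      (m : ℕ) ≤ (b : ℕ) ∧ (b : ℕ) < (r : ℕ) ∧
      (∀ x : V, x ∈ T ↔ ((m : ℕ) ≤ ((α.symm x) : ℕ) ∧ ((α.symm x) : ℕ) ≤ (b : ℕ))) ∧
      IsIntervalIn β T ∧ (∀ x ∈ T, (m : ℕ) < ((β.symm x) : ℕ))} with hBdef
  have hBne : B.Nonempty := by
    obtain ⟨b, T, h1, h2, h3, h4, h5⟩ := hT0
    exact ⟨b, T, h1, h2, h3, h4, h5⟩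
  obtain ⟨b, hbB, hbmax⟩ := Set.Finite.exists_maximalFor id B (Set.toFinite B) hBne
  obtain ⟨T, hmb, hbr, hTα, hTβ, hTlo⟩ := hbB
  have hαmT : α m ∈ T := (hTα (α m)).2 (by simp [hmb])
  -- d = maximal β-position inside T
  have hTfin : T.Finite := Set.toFinite T
  have hTne : T.Nonempty := ⟨α m, hαmT⟩
  set Dfin : Finset (Fin n) := hTfin.toFinset.image (fun x => β.symm x) with hDdef
  have hDne : Dfin.Nonempty :=
    ⟨β.symm (α m), Finset.mem_image.mpr ⟨α m, hTfin.mem_toFinset.mpr hαmT, rfl⟩⟩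
  set d : Fin n := Dfin.max' hDne with hddef
  have hdT : β d ∈ T := by
    obtain ⟨x0, hx0, hxd⟩ := Finset.mem_image.mp (Dfin.max'_mem hDne)
    have hx0T : x0 ∈ T := hTfin.mem_toFinset.mp hx0
    have hbd : β d = x0 := by rw [hddef, ← hxd]; exact Equiv.apply_symm_apply β x0
    rwa [hbd]
  have hdub : ∀ x ∈ T, ((β.symm x : Fin n) : ℕ) ≤ (d : ℕ) := by
    intro x hx
    exact Finset.le_max' Dfin _ (Finset.mem_image.mpr ⟨x, hTfin.mem_toFinset.mpr hx, rfl⟩)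
  have hmd : (m : ℕ) < (d : ℕ) := lt_of_lt_of_le (hTlo (α m) hαmT) (hdub _ hαmT)
  -- the cut C = β '' [m, d]
  set C : Set V := {u : V | (m : ℕ) ≤ ((β.symm u) : ℕ) ∧ ((β.symm u) : ℕ) ≤ (d : ℕ)}
    with hCdef
  have hTC : ∀ x ∈ T, x ∈ C := fun x hx => ⟨(hTlo x hx).le, hdub x hx⟩
  have hCcard : C.ncard = (d : ℕ) + 1 - (m : ℕ) := by
    have hCeq : C = ↑((Finset.Icc m d).image β) := by
      ext u
      simp only [hCdef, Set.mem_setOf_eq, Finset.coe_image, Set.mem_image,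
        Finset.mem_coe, Finset.mem_Icc]
      constructor
      · rintro ⟨h1, h2⟩
        exact ⟨β.symm u, ⟨Fin.le_def.mpr h1, Fin.le_def.mpr h2⟩, by simp⟩
      · rintro ⟨i, ⟨h1, h2⟩, rfl⟩
        simpa using ⟨Fin.le_def.mp h1, Fin.le_def.mp h2⟩
    rw [hCeq, Set.ncard_coe_finset,
      Finset.card_image_of_injective _ β.injective, Fin.card_Icc]
  have hc2 : 2 ≤ C.ncard := by rw [hCcard]; omega
  have hcle : C.ncard ≤ Fintype.card V - 1 := by
    rw [hCcard, ← hn]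
    have := d.isLt
    omega
  obtain ⟨S, hS, ⟨x, hxS, hxC⟩, ⟨y, hyC, hyS⟩, ⟨w, hwS, hwC⟩⟩ := exists_cross hcf hc2 hcle
  have hSα : IsIntervalIn α S := hα S hS
  have hSβ : IsIntervalIn β S := hβ S hS
  rw [hCdef, Set.mem_setOf_eq] at hxC hyC
  have hwC' : ((β.symm w : Fin n) : ℕ) < (m : ℕ) ∨ (d : ℕ) < ((β.symm w : Fin n) : ℕ) := by
    by_contra h
    push_neg at h
    exact hwC ⟨h.1, h.2⟩
  have hβmr : α r = β m := by rw [hrdef, Equiv.apply_symm_apply]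
  rcases hwC' with hw1 | hw2
  · -- Case 1: w lies before position m in β; contradiction with y.
    -- w is in the common prefix, so α.symm w = β.symm w < m
    have hw' : α (β.symm w) = w := by
      rw [hpre _ hw1, Equiv.apply_symm_apply]
    have hβmS : β m ∈ S := betw hSβ hwS hxS (j := m) (by omega) hxC.1
    -- β d ∈ S: its α-position lies in [m, b] ⊆ [β.symm w, r]
    have hβdS : β d ∈ S := by
      have h1 : ((α.symm w : Fin n) : ℕ) = ((β.symm w : Fin n) : ℕ) := by
        have : α.symm w = β.symm w := α.injective (by simp [hw'])
        rw [this]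
      have hd1 : (m : ℕ) ≤ ((α.symm (β d) : Fin n) : ℕ) := ((hTα (β d)).1 hdT).1
      have hd2 : ((α.symm (β d) : Fin n) : ℕ) ≤ (b : ℕ) := ((hTα (β d)).1 hdT).2
      have := betw hSα hwS hβmS (j := α.symm (β d)) (by omega)
        (by rw [← hβmr]; simp only [Equiv.symm_apply_apply]; omega)
      simpa using this
    -- now y is between w and β d in β-order, so y ∈ S; contradiction
    have : β (β.symm y) ∈ S := betw hSβ hwS hβdS (j := β.symm y) (by omega)
      (by simp only [Equiv.symm_apply_apply]; omega)
    rw [Equiv.apply_symm_apply] at this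
    exact hyS this
  · -- Case 2: w lies after position d in β; extend T by S, contradicting maximality.
    have hβdS : β d ∈ S := betw hSβ hxS hwS (j := d) (by omega) (by omega)
    have hlo : ∀ u ∈ S, (β.symm y : ℕ) < ((β.symm u : Fin n) : ℕ) := by
      intro u hu
      by_contra h
      push_neg at h
      have : β (β.symm y) ∈ S := betw hSβ hu hwS (j := β.symm y) h (by omega)
      rw [Equiv.apply_symm_apply] at this
      exact hyS this
    have hSlo : ∀ u ∈ S, (m : ℕ) < ((β.symm u : Fin n) : ℕ) := by
      intro u hu
      have := hlo u hu
      omega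
    have hβmS : β m ∉ S := by
      intro h
      have := hSlo _ h
      simp at this
    have hSm : ∀ u ∈ S, (m : ℕ) ≤ ((α.symm u : Fin n) : ℕ) := by
      intro u hu
      by_contra h
      push_neg at h
      have : α (α.symm u) = β (α.symm u) := hpre _ h
      rw [Equiv.apply_symm_apply] at this
      have h2 := hSlo u hu
      rw [this] at h2
      simp at h2
      omega
    have hdb : ((α.symm (β d) : Fin n) : ℕ) ≤ (b : ℕ) := ((hTα (β d)).1 hdT).2
    have hSr : ∀ u ∈ S, ((α.symm u : Fin n) : ℕ) < (r : ℕ) := by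
      intro u hu
      by_contra h
      push_neg at h
      have : α r ∈ S := betw hSα hβdS hu (j := r) (by omega) (by omega)
      rw [hβmr] at this
      exact hβmS this
    -- the union U = T ∪ S
    set U : Set V := T ∪ S with hUdef
    have hUfin : U.Finite := Set.toFinite U
    have hUne : U.Nonempty := ⟨α m, Set.mem_union_left S hαmT⟩
    set Efin : Finset (Fin n) := hUfin.toFinset.image (fun x => α.symm x) with hEdef
    have hEne : Efin.Nonempty :=
      ⟨α.symm (α m), Finset.mem_image.mpr
        ⟨α m, hUfin.mem_toFinset.mpr (Set.mem_union_left S hαmT), rfl⟩⟩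
    set b' : Fin n := Efin.max' hEne with hb'def
    have hb'U : α b' ∈ U := by
      obtain ⟨x0, hx0, hxd⟩ := Finset.mem_image.mp (Efin.max'_mem hEne)
      have hx0U : x0 ∈ U := hUfin.mem_toFinset.mp hx0
      have hbd : α b' = x0 := by rw [hb'def, ← hxd]; exact Equiv.apply_symm_apply α x0
      rwa [hbd]
    have hb'ub : ∀ x ∈ U, ((α.symm x : Fin n) : ℕ) ≤ (b' : ℕ) := by
      intro x' hx'
      exact Finset.le_max' Efin _ (Finset.mem_image.mpr ⟨x', hUfin.mem_toFinset.mpr hx', rfl⟩)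
    have hTub : ∀ x ∈ T, ((α.symm x : Fin n) : ℕ) ≤ (b : ℕ) := fun x hx => ((hTα x).1 hx).2
    have hTlb : ∀ x ∈ T, (m : ℕ) ≤ ((α.symm x : Fin n) : ℕ) := fun x hx => ((hTα x).1 hx).1
    -- w witnesses b < b'
    have hwT : w ∉ T := by
      intro h
      have := hdub w h
      omega
    have hwb : (b : ℕ) < ((α.symm w : Fin n) : ℕ) := by
      by_contra h
      push_neg at h
      exact hwT ((hTα w).2 ⟨hSm w hwS, h⟩)
    have hbb' : (b : ℕ) < (b' : ℕ) :=
      lt_of_lt_of_le hwb (hb'ub w (Set.mem_union_right T hwS))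
    -- U is a witness for b'
    have hb'B : b' ∈ B := by
      refine ⟨U, ?_, ?_, ?_, ?_, ?_⟩
      · omega
      · rcases hb'U with h | h
        · have := hTub _ h; simp only [Equiv.symm_apply_apply] at this; omega
        · have := hSr _ h; simp only [Equiv.symm_apply_apply] at this; omega
      · intro x'
        constructor
        · intro hx'
          refine ⟨?_, hb'ub x' hx'⟩
          rcases hx' with h | h
          · exact hTlb _ h
          · exact hSm _ h
        · rintro ⟨h1, h2⟩
          rcases le_or_gt ((α.symm x' : Fin n) : ℕ) (b : ℕ) with h | h
          · exact Or.inl ((hTα x').2 ⟨h1, h⟩)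
          · refine Or.inr ?_
            have hb'S : α b' ∈ S := by
              rcases hb'U with hh | hh
              · exfalso
                have := hTub _ hh
                simp only [Equiv.symm_apply_apply] at this
                omega
              · exact hh
            have := betw hSα hβdS hb'S (j := α.symm x') (by omega)
              (by simp only [Equiv.symm_apply_apply]; omega)
            simpa using this
      · exact interval_union hTβ hSβ hdT hβdS
      · intro x' hx'
        rcases hx' with h | h
        · exact hTlo _ h
        · exact hSlo _ h
    have heq : b = b' := le_antisymm (Fin.le_def.mpr (le_of_lt hbb')) (hbmax hb'B (Fin.le_def.mpr (le_of_lt hbb')))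
    rw [heq] at hbb'
    omega

end Core

section Step

variable {V : Type*} [Fintype V] [DecidableEq V] {n : ℕ}

lemma exists_max_pos (α : Fin n ≃ V) (S : Set V) (hne : S.Nonempty) :
    ∃ b : Fin n, α b ∈ S ∧ ∀ x ∈ S, ((α.symm x : Fin n) : ℕ) ≤ (b : ℕ) := by
  classical
  have hfin : S.Finite := Set.toFinite S
  set F : Finset (Fin n) := hfin.toFinset.image (fun x => α.symm x) with hF
  have hFne : F.Nonempty :=
    ⟨α.symm hne.some, Finset.mem_image.mpr ⟨hne.some, hfin.mem_toFinset.mpr hne.some_mem, rfl⟩⟩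
  refine ⟨F.max' hFne, ?_, ?_⟩
  · obtain ⟨x0, hx0, hxd⟩ := Finset.mem_image.mp (F.max'_mem hFne)
    have hbd : α (F.max' hFne) = x0 := by rw [← hxd]; exact Equiv.apply_symm_apply α x0
    rw [hbd]; exact hfin.mem_toFinset.mp hx0
  · intro x hx
    exact Finset.le_max' F _ (Finset.mem_image.mpr ⟨x, hfin.mem_toFinset.mpr hx, rfl⟩)

lemma mkT (hn : n = Fintype.card V) (𝒮 : Set (Set V)) (hcf : CutFree 𝒮)
    (α β : Fin n ≃ V) (hα : ConsecutiveOrd α 𝒮) (hβ : ConsecutiveOrd β 𝒮)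
    (m : Fin n) (hm : 1 ≤ (m : ℕ))
    (hpre : ∀ j : Fin n, (j : ℕ) < (m : ℕ) → α j = β j)
    (hr : (m : ℕ) < ((α.symm (β m)) : ℕ)) (hρ : (m : ℕ) < ((β.symm (α m)) : ℕ))
    (S : Set V) (hS : S ∈ 𝒮) (hαmS : α m ∈ S) (hβmS : β m ∉ S) : False := by
  have hSα : IsIntervalIn α S := hα S hS
  have hSβ : IsIntervalIn β S := hβ S hS
  have hSlo : ∀ u ∈ S, (m : ℕ) < ((β.symm u : Fin n) : ℕ) := by
    intro u hu
    by_contra h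
    push_neg at h
    exact hβmS (betw hSβ hu hαmS (j := m) h hρ.le)
  have hSm : ∀ u ∈ S, (m : ℕ) ≤ ((α.symm u : Fin n) : ℕ) := by
    intro u hu
    by_contra h
    push_neg at h
    have he : α (α.symm u) = β (α.symm u) := hpre _ h
    rw [Equiv.apply_symm_apply] at he
    have h2 := hSlo u hu
    rw [he] at h2
    simp only [Equiv.symm_apply_apply] at h2
    omega
  have hSr : ∀ u ∈ S, ((α.symm u : Fin n) : ℕ) < ((α.symm (β m)) : ℕ) := by
    intro u hu
    by_contra h
    push_neg at h
    have : α (α.symm (β m)) ∈ S := betw hSα hαmS hu (j := α.symm (β m))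
      (by simp only [Equiv.symm_apply_apply]; omega) h
    rw [Equiv.apply_symm_apply] at this
    exact hβmS this
  obtain ⟨b, hbS, hbub⟩ := exists_max_pos α S ⟨α m, hαmS⟩
  apply core hn 𝒮 hcf α β hα hβ m hm hpre
  refine ⟨b, S, ?_, ?_, ?_, hSβ, hSlo⟩
  · have := hbub (α m) hαmS
    simpa using this
  · have := hSr (α b) hbS
    simpa using this
  · intro x
    constructor
    · intro hx
      exact ⟨hSm x hx, hbub x hx⟩
    · rintro ⟨h1, h2⟩
      have := betw hSα hαmS hbS (j := α.symm x)
        (by simp only [Equiv.symm_apply_apply]; omega)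
        (by simp only [Equiv.symm_apply_apply]; omega)
      simpa using this

lemma step (hn : n = Fintype.card V) (h3 : 3 ≤ n) (𝒮 : Set (Set V)) (hcf : CutFree 𝒮)
    (α β : Fin n ≃ V) (hα : ConsecutiveOrd α 𝒮) (hβ : ConsecutiveOrd β 𝒮)
    (m : Fin n) (hm : 1 ≤ (m : ℕ))
    (hpre : ∀ j : Fin n, (j : ℕ) < (m : ℕ) → α j = β j)
    (hr : (m : ℕ) < ((α.symm (β m)) : ℕ)) (hρ : (m : ℕ) < ((β.symm (α m)) : ℕ)) : False := by
  have hne : α m ≠ β m := by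
    intro h
    have h1 : α.symm (β m) = m := by rw [← h]; simp
    rw [h1] at hr
    omega
  have hc2 : 2 ≤ ({α m, β m} : Set V).ncard := (Set.ncard_pair hne).ge
  have hcle : ({α m, β m} : Set V).ncard ≤ Fintype.card V - 1 := by
    rw [Set.ncard_pair hne, ← hn]; omega
  obtain ⟨S, hS, ⟨x, hxS, hxC⟩, ⟨y, hyC, hyS⟩, -⟩ := exists_cross hcf hc2 hcle
  simp only [Set.mem_insert_iff, Set.mem_singleton_iff] at hxC hyC
  rcases hxC with rfl | rfl
  · have hβmS : β m ∉ S := by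
      rcases hyC with rfl | rfl
      · exact (hyS hxS).elim
      · exact hyS
    exact mkT hn 𝒮 hcf α β hα hβ m hm hpre hr hρ S hS hxS hβmS
  · have hαmS : α m ∉ S := by
      rcases hyC with rfl | rfl
      · exact hyS
      · exact (hyS hxS).elim
    exact mkT hn 𝒮 hcf β α hβ hα m hm (fun j hj => (hpre j hj).symm) hρ hr S hS hxS hαmS

lemma agree (hn : n = Fintype.card V) (h3 : 3 ≤ n) (𝒮 : Set (Set V)) (hcf : CutFree 𝒮)
    (σ τ : Fin n ≃ V) (hσ : ConsecutiveOrd σ 𝒮) (hτ : ConsecutiveOrd τ 𝒮)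
    (h0 : τ ⟨0, by omega⟩ = σ ⟨0, by omega⟩) : ∀ k : Fin n, τ k = σ k := by
  by_contra hcon
  push_neg at hcon
  obtain ⟨k₀, hk₀⟩ := hcon
  classical
  have hQ : ∃ j : ℕ, ∃ h : j < n, τ ⟨j, h⟩ ≠ σ ⟨j, h⟩ := ⟨(k₀ : ℕ), k₀.isLt, by simpa using hk₀⟩
  obtain ⟨hm₀n, hm₀⟩ := Nat.find_spec hQ
  set m : Fin n := ⟨Nat.find hQ, hm₀n⟩ with hmdef
  have hm1 : 1 ≤ Nat.find hQ := by
    by_contra h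
    push_neg at h
    have h0' : Nat.find hQ = 0 := by omega
    apply hm₀
    have he : m = ⟨0, by omega⟩ := by
      apply Fin.ext
      simpa [hmdef] using h0'
    rw [he]
    exact h0
  have hpre : ∀ j : Fin n, (j : ℕ) < (m : ℕ) → σ j = τ j := by
    intro j hj
    have h1 := Nat.find_min hQ (m := (j : ℕ)) hj
    push_neg at h1
    have h2 := h1 j.isLt
    simpa using h2.symm
  have hr : (m : ℕ) < ((σ.symm (τ m)) : ℕ) := by
    rcases lt_trichotomy (((σ.symm (τ m)) : Fin n) : ℕ) ((m : ℕ)) with h | h | h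
    · exfalso
      have h2 := hpre (σ.symm (τ m)) h
      rw [Equiv.apply_symm_apply] at h2
      have h3' : σ.symm (τ m) = m := τ.injective h2.symm
      rw [h3'] at h
      omega
    · exfalso
      apply hm₀
      have hfe : σ.symm (τ m) = m := Fin.ext h
      have h2 := congrArg σ hfe
      rw [Equiv.apply_symm_apply] at h2
      exact h2
    · exact h
  have hρ : (m : ℕ) < ((τ.symm (σ m)) : ℕ) := by
    rcases lt_trichotomy (((τ.symm (σ m)) : Fin n) : ℕ) ((m : ℕ)) with h | h | h
    · exfalso
      have h2 := hpre (τ.symm (σ m)) h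
      rw [Equiv.apply_symm_apply] at h2
      have h3' : τ.symm (σ m) = m := σ.injective h2
      rw [h3'] at h
      omega
    · exfalso
      apply hm₀
      have hfe : τ.symm (σ m) = m := Fin.ext h
      have h2 := congrArg τ hfe
      rw [Equiv.apply_symm_apply] at h2
      exact h2.symm
    · exact h
  exact step hn h3 𝒮 hcf σ τ hσ hτ m hm1 hpre hr hρ

end Step

section Endpoint

set_option linter.unusedSectionVars false

variable {V : Type*} [Fintype V] [DecidableEq V] {n : ℕ}

lemma endpoint (hn : n = Fintype.card V) (h3 : 3 ≤ n) (𝒮 : Set (Set V)) (hcf : CutFree 𝒮)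
    (σ τ : Fin n ≃ V) (hσ : ConsecutiveOrd σ 𝒮) (hτ : ConsecutiveOrd τ 𝒮) :
    ((σ.symm (τ ⟨0, by omega⟩) : Fin n) : ℕ) = 0 ∨
      ((σ.symm (τ ⟨0, by omega⟩) : Fin n) : ℕ) = n - 1 := by
  by_contra hcon
  push_neg at hcon
  obtain ⟨hz0, hzn⟩ := hcon
  set z : Fin n := σ.symm (τ ⟨0, by omega⟩) with hzdef
  have hz1 : 1 ≤ (z : ℕ) := by omega
  have hz2 : (z : ℕ) ≤ n - 2 := by have := z.isLt; omega
  have hne0 : ∀ j : Fin n, (j : ℕ) ≠ 0 → ((σ.symm (τ j) : Fin n) : ℕ) ≠ (z : ℕ) := by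
    intro j hj h
    apply hj
    have h1 : σ.symm (τ j) = z := Fin.ext h
    rw [hzdef] at h1
    have h2 : τ j = τ ⟨0, by omega⟩ := σ.symm.injective h1
    have h3' : j = ⟨0, by omega⟩ := τ.injective h2
    rw [h3']
  have hswitch : ∃ k : ℕ, 1 ≤ k ∧ ∃ hk2 : k ≤ n - 2,
      ¬ (((σ.symm (τ ⟨k, by omega⟩) : Fin n) : ℕ) < (z : ℕ) ↔
         ((σ.symm (τ ⟨k + 1, by omega⟩) : Fin n) : ℕ) < (z : ℕ)) := by
    by_contra hsw
    push_neg at hsw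
    have hconst : ∀ j : ℕ, 1 ≤ j → ∀ hj : j < n,
        (((σ.symm (τ ⟨j, hj⟩) : Fin n) : ℕ) < (z : ℕ) ↔
         ((σ.symm (τ ⟨1, by omega⟩) : Fin n) : ℕ) < (z : ℕ)) := by
      intro j hj1
      induction j, hj1 using Nat.le_induction with
      | base => intro hj; exact Iff.rfl
      | succ i hi ih =>
        intro hj
        have hkk := hsw i hi (by omega)
        exact (hkk.symm).trans (ih (by omega))
    classical
    set f : ℕ → ℕ := fun j => if h : j < n then ((σ.symm (τ ⟨j, h⟩) : Fin n) : ℕ) else 0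
      with hfdef
    have hinj : Set.InjOn f ↑(Finset.Icc 1 (n - 1)) := by
      intro a ha b hb hfab
      simp only [Finset.coe_Icc, Set.mem_Icc] at ha hb
      have han : a < n := by omega
      have hbn : b < n := by omega
      rw [hfdef] at hfab
      simp only [dif_pos han, dif_pos hbn] at hfab
      have h1 : (⟨a, han⟩ : Fin n) = ⟨b, hbn⟩ := τ.injective (σ.symm.injective (Fin.ext hfab))
      simpa using h1
    rcases Classical.em (((σ.symm (τ ⟨1, by omega⟩) : Fin n) : ℕ) < (z : ℕ)) with hb1 | hb1
    · have hcard := Finset.card_le_card_of_injOn f (t := Finset.range (z : ℕ)) ?_ hinj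
      · rw [Nat.card_Icc, Finset.card_range] at hcard
        omega
      · intro j hj
        simp only [Finset.mem_coe, Finset.mem_Icc] at hj
        have hjn : j < n := by omega
        rw [Finset.mem_coe, Finset.mem_range, hfdef]
        simp only [dif_pos hjn]
        exact (hconst j hj.1 hjn).mpr hb1
    · have hcard := Finset.card_le_card_of_injOn f (t := Finset.Ioc (z : ℕ) (n - 1)) ?_ hinj
      · rw [Nat.card_Icc, Nat.card_Ioc] at hcard
        omega
      · intro j hj
        simp only [Finset.mem_coe, Finset.mem_Icc] at hj
        have hjn : j < n := by omega
        rw [Finset.mem_coe, Finset.mem_Ioc, hfdef]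
        simp only [dif_pos hjn]
        constructor
        · have hne := hne0 ⟨j, hjn⟩ (by show j ≠ 0; omega)
          have hnlt : ¬ ((σ.symm (τ ⟨j, hjn⟩) : Fin n) : ℕ) < (z : ℕ) :=
            fun hlt => hb1 ((hconst j hj.1 hjn).mp hlt)
          omega
        · have := (σ.symm (τ ⟨j, hjn⟩)).isLt
          omega
  obtain ⟨k, hk1, hk2, hkiff⟩ := hswitch
  have hkn : k < n := by omega
  have hk1n : k + 1 < n := by omega
  set C : Set V := {u : V | ((τ.symm u : Fin n) : ℕ) ≤ k} with hCdef
  have hCcard : C.ncard = k + 1 := by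
    have hCeq : C = ↑((Finset.Iic (⟨k, hkn⟩ : Fin n)).image τ) := by
      ext u
      simp only [hCdef, Set.mem_setOf_eq, Finset.coe_image, Set.mem_image, Finset.mem_coe,
        Finset.mem_Iic]
      constructor
      · intro h
        exact ⟨τ.symm u, Fin.le_def.mpr h, by simp⟩
      · rintro ⟨i, hi, rfl⟩
        simpa using Fin.le_def.mp hi
    rw [hCeq, Set.ncard_coe_finset, Finset.card_image_of_injective _ τ.injective, Fin.card_Iic]
  have hc2 : 2 ≤ C.ncard := by omega
  have hcle : C.ncard ≤ Fintype.card V - 1 := by rw [hCcard, ← hn]; omega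
  obtain ⟨S, hS, ⟨x, hxS, hxC⟩, ⟨y, hyC, hyS⟩, ⟨w, hwS, hwC⟩⟩ := exists_cross hcf hc2 hcle
  have hSσ : IsIntervalIn σ S := hσ S hS
  have hSτ : IsIntervalIn τ S := hτ S hS
  rw [hCdef, Set.mem_setOf_eq] at hxC hyC
  have hw : k < ((τ.symm w : Fin n) : ℕ) := by
    by_contra h
    push_neg at h
    exact hwC h
  have hτk : τ ⟨k, hkn⟩ ∈ S := betw hSτ hxS hwS (j := ⟨k, hkn⟩)
    (show ((τ.symm x : Fin n) : ℕ) ≤ k from hxC) (show k ≤ _ by omega)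
  have hτk1 : τ ⟨k + 1, hk1n⟩ ∈ S := betw hSτ hxS hwS (j := ⟨k + 1, hk1n⟩)
    (show ((τ.symm x : Fin n) : ℕ) ≤ k + 1 by omega) (show k + 1 ≤ _ by omega)
  have hτ0 : τ ⟨0, by omega⟩ ∉ S := by
    intro h0S
    have h1 : τ (τ.symm y) ∈ S := betw hSτ h0S hwS (j := τ.symm y)
      (by simp) (by omega)
    rw [Equiv.apply_symm_apply] at h1
    exact hyS h1
  have ha := hne0 ⟨k, hkn⟩ (by show k ≠ 0; omega)
  have hb := hne0 ⟨k + 1, hk1n⟩ (by show k + 1 ≠ 0; omega)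
  have hcases : (((σ.symm (τ ⟨k, hkn⟩) : Fin n) : ℕ) < (z : ℕ) ∧
        (z : ℕ) < ((σ.symm (τ ⟨k + 1, hk1n⟩) : Fin n) : ℕ)) ∨
      (((σ.symm (τ ⟨k + 1, hk1n⟩) : Fin n) : ℕ) < (z : ℕ) ∧
        (z : ℕ) < ((σ.symm (τ ⟨k, hkn⟩) : Fin n) : ℕ)) := by
    rcases Classical.em (((σ.symm (τ ⟨k, hkn⟩) : Fin n) : ℕ) < (z : ℕ)) with h | h
    · left
      refine ⟨h, ?_⟩
      have hnb : ¬ ((σ.symm (τ ⟨k + 1, hk1n⟩) : Fin n) : ℕ) < (z : ℕ) :=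
        fun hb' => hkiff ⟨fun _ => hb', fun _ => h⟩
      omega
    · right
      have hbz : ((σ.symm (τ ⟨k + 1, hk1n⟩) : Fin n) : ℕ) < (z : ℕ) := by
        by_contra hb'
        exact hkiff ⟨fun ha' => absurd ha' h, fun hb'' => absurd hb'' hb'⟩
      exact ⟨hbz, by omega⟩
  have hzS : σ z ∈ S := by
    rcases hcases with ⟨h1, h2⟩ | ⟨h1, h2⟩
    · exact betw hSσ hτk hτk1 (j := z) h1.le h2.le
    · exact betw hSσ hτk1 hτk (j := z) h1.le h2.le
  rw [hzdef, Equiv.apply_symm_apply] at hzS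
  exact hτ0 hzS

end Endpoint

/-- A consecutive ordering of `V` to a cut-free family is unique up to reversal. -/
theorem consecutive_ordering_unique_up_to_reversal
    {V : Type*} [Fintype V] [DecidableEq V] {n : ℕ}
    (hn : n = Fintype.card V) (h3 : 3 ≤ n)
    (𝒮 : Set (Set V)) (hcf : CutFree 𝒮)
    (σ τ : Fin n ≃ V)
    (hσ : ConsecutiveOrd σ 𝒮) (hτ : ConsecutiveOrd τ 𝒮) :
    (∀ k : Fin n, τ k = σ k) ∨ (∀ k : Fin n, τ k = σ k.rev) := by
  have h0n : 0 < n := by omega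
  rcases endpoint hn h3 𝒮 hcf σ τ hσ hτ with hz | hz
  · left
    have h0 : τ ⟨0, h0n⟩ = σ ⟨0, h0n⟩ := by
      have h1 : σ.symm (τ ⟨0, h0n⟩) = ⟨0, h0n⟩ := Fin.ext hz
      have h2 := congrArg σ h1
      rwa [Equiv.apply_symm_apply] at h2
    exact agree hn h3 𝒮 hcf σ τ hσ hτ h0
  · right
    set σ' : Fin n ≃ V := Fin.revPerm.trans σ with hσ'def
    have happ : ∀ k : Fin n, σ' k = σ k.rev := by
      intro k
      rw [hσ'def]
      rfl
    have hσ' : ConsecutiveOrd σ' 𝒮 := by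
      intro S hS i j k hij hjk hi hk
      rw [happ] at hi hk ⊢
      exact hσ S hS k.rev j.rev i.rev (Fin.rev_le_rev.mpr hjk) (Fin.rev_le_rev.mpr hij) hk hi
    have h0' : τ ⟨0, h0n⟩ = σ' ⟨0, h0n⟩ := by
      rw [happ]
      have hrev : (⟨0, h0n⟩ : Fin n).rev = σ.symm (τ ⟨0, h0n⟩) := by
        have hz' : ((σ.symm (τ ⟨0, h0n⟩) : Fin n) : ℕ) = n - 1 := hz
        apply Fin.ext
        rw [Fin.val_rev, hz']
      rw [hrev, Equiv.apply_symm_apply]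
    have hall := agree hn h3 𝒮 hcf σ' τ hσ' hτ h0'
    intro k
    rw [hall k, happ]
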